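/- Let ℓ ≥ 1 and v ≥ 2 be integers, and let F be the free group on generators x₁, x₂, …, x_{ℓ+2}. Let H be the subgroup generated by the elements x₁^i x₂ x₁^{-(i+1)} for 0 ≤ i ≤ v−2 together with x₃, x₄, …, x_{ℓ+2}, and let K be the subgroup generated by x₁ and x₂. Then r̄(H ∩ K) = v − 2 and r̄(H ∨ K) = ℓ + 1. -/

import Mathlib

open Multiplicative

/-- The rank of a group: the minimal cardinality of a (finite) generating set. -/
noncomputable def grank (G : Type*) [Group G] : ℕ :=
  sInf {n : ℕ | ∃ S : Finset G, S.card = n ∧ Subgroup.closure (S : Set G) = ⊤}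

/-- The reduced rank of a group: `max (0, rank - 1)` (truncated subtraction). -/
noncomputable def rbar (G : Type*) [Group G] : ℕ := grank G - 1

lemma grank_eq_of {G : Type*} [Group G] {n : ℕ} (S : Finset G) (hcard : S.card = n)
    (hS : Subgroup.closure (S : Set G) = ⊤)
    (hlow : ∀ T : Finset G, Subgroup.closure (T : Set G) = ⊤ → n ≤ T.card) :
    grank G = n := by
  refine le_antisymm (Nat.sInf_le ⟨S, hcard, hS⟩) (le_csInf ⟨n, S, hcard, hS⟩ ?_)
  rintro m ⟨T, rfl, hT⟩
  exact hlow T hT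

lemma grank_mem_aux {G G' : Type*} [Group G] [Group G'] (e : G ≃* G') (n : ℕ)
    (h : ∃ S : Finset G, S.card = n ∧ Subgroup.closure (S : Set G) = ⊤) :
    ∃ S : Finset G', S.card = n ∧ Subgroup.closure (S : Set G') = ⊤ := by
  classical
  obtain ⟨S, rfl, hS⟩ := h
  refine ⟨S.image e, Finset.card_image_of_injective _ e.injective, ?_⟩
  rw [Finset.coe_image]
  rw [show (⇑e '' (S : Set G)) = ⇑(e : G →* G') '' (S : Set G) from rfl,
    ← MonoidHom.map_closure, hS]
  exact Subgroup.map_top_of_surjective _ e.surjective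

lemma grank_congr {G G' : Type*} [Group G] [Group G'] (e : G ≃* G') :
    grank G = grank G' := by
  unfold grank
  congr 1
  ext n
  exact ⟨grank_mem_aux e n, grank_mem_aux e.symm n⟩

lemma card_ge_of_linearIndependent {G V : Type*} [Group G] [AddCommGroup V]
    [Module (ZMod 2) V] [Module.Finite (ZMod 2) V]
    (f : G →* Multiplicative V) {n : ℕ} {w : Fin n → V}
    (hw : LinearIndependent (ZMod 2) w)
    (hmem : ∀ i, Multiplicative.ofAdd (w i) ∈ f.range)
    (S : Finset G) (hS : Subgroup.closure (S : Set G) = ⊤) : n ≤ S.card := by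
  classical
  set T : Finset V := S.image (fun g => Multiplicative.toAdd (f g)) with hTdef
  have key : ∀ x : G, Multiplicative.toAdd (f x) ∈ Submodule.span (ZMod 2) (T : Set V) := by
    intro x
    have hx : x ∈ Subgroup.closure (S : Set G) := by rw [hS]; trivial
    induction hx using Subgroup.closure_induction with
    | mem g hg =>
        exact Submodule.subset_span (by exact_mod_cast Finset.mem_image_of_mem _ hg)
    | one => simpa using (Submodule.span (ZMod 2) (T : Set V)).zero_mem
    | mul a b _ _ ha hb => simpa [map_mul] using
        (Submodule.span (ZMod 2) (T : Set V)).add_mem ha hb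
    | inv a _ ha => simpa using (Submodule.span (ZMod 2) (T : Set V)).neg_mem ha
  have hw_span : Submodule.span (ZMod 2) (Set.range w) ≤ Submodule.span (ZMod 2) (T : Set V) := by
    rw [Submodule.span_le]
    rintro _ ⟨i, rfl⟩
    obtain ⟨g, hg⟩ := hmem i
    have := key g
    rw [hg] at this
    simpa using this
  have h1 : Module.finrank (ZMod 2) (Submodule.span (ZMod 2) (Set.range w)) = n := by
    rw [finrank_span_eq_card hw, Fintype.card_fin]
  have h2 := Submodule.finrank_mono (R := ZMod 2) (M := V) hw_span
  have h3 := finrank_span_finset_le_card (R := ZMod 2) (M := V) T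
  have h4 : T.card ≤ S.card := by rw [hTdef]; exact Finset.card_image_le
  unfold Set.finrank at h3
  omega

lemma closure_subtype_top {G : Type*} [Group G] (U : Subgroup G) (S : Finset ↥U)
    (h : Subgroup.closure ((↑) '' (S : Set ↥U)) = U) :
    Subgroup.closure (S : Set ↥U) = ⊤ := by
  apply Subgroup.map_injective U.subtype_injective
  rw [MonoidHom.map_closure, ← MonoidHom.range_eq_map, U.range_subtype]
  simpa using h

/-- Shift automorphism of `Multiplicative (ZMod v → ZMod 2)` by an integer. -/
def tauM (v : ℕ) (z : ℤ) :
    Multiplicative (ZMod v → ZMod 2) ≃* Multiplicative (ZMod v → ZMod 2) where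
  toFun u := Multiplicative.ofAdd (fun x => Multiplicative.toAdd u (x - (z : ZMod v)))
  invFun u := Multiplicative.ofAdd (fun x => Multiplicative.toAdd u (x + (z : ZMod v)))
  left_inv u := by
    apply Multiplicative.toAdd.injective
    funext x
    simp
  right_inv u := by
    apply Multiplicative.toAdd.injective
    funext x
    simp
  map_mul' u w := rfl

/-- The shift action of `ℤ` on `Multiplicative (ZMod v → ZMod 2)`. -/
def phiz (v : ℕ) : Multiplicative ℤ →* MulAut (Multiplicative (ZMod v → ZMod 2)) where
  toFun z := tauM v (Multiplicative.toAdd z)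
  map_one' := by
    ext u
    apply Multiplicative.toAdd.injective
    rename_i x
    show Multiplicative.toAdd u (x - ((Multiplicative.toAdd (1 : Multiplicative ℤ) : ℤ) : ZMod v))
      = Multiplicative.toAdd u x
    simp
  map_mul' a b := by
    ext u
    apply Multiplicative.toAdd.injective
    rename_i x
    show Multiplicative.toAdd u (x - ((Multiplicative.toAdd (a * b) : ℤ) : ZMod v)) =
      Multiplicative.toAdd u (x - ((Multiplicative.toAdd a : ℤ) : ZMod v)
        - ((Multiplicative.toAdd b : ℤ) : ZMod v))
    congr 1
    rw [toAdd_mul]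
    push_cast
    ring

/-- The conjugated generators `a^i b a^{-(i+1)}`. -/
def conjGen {G : Type*} [Group G] (a b : G) (i : ℕ) : G :=
  a ^ (i : ℤ) * b * a ^ (-((i : ℤ) + 1))

/-- Generating data for the homomorphism to the lamplighter-like group. -/
def psiGen (ℓ v : ℕ) :
    Fin (ℓ + 2) → (Multiplicative (ZMod v → ZMod 2)) ⋊[phiz v] Multiplicative ℤ :=
  fun j =>
    if (j : ℕ) = 0 then SemidirectProduct.inr (Multiplicative.ofAdd (1 : ℤ))
    else if (j : ℕ) = 1 then
      SemidirectProduct.inl (Multiplicative.ofAdd (Pi.single (0 : ZMod v) (1 : ZMod 2))) *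
        SemidirectProduct.inr (Multiplicative.ofAdd (1 : ℤ))
    else 1

/-- The homomorphism to the lamplighter-like group. -/
def psi (ℓ v : ℕ) :
    FreeGroup (Fin (ℓ + 2)) →* (Multiplicative (ZMod v → ZMod 2)) ⋊[phiz v] Multiplicative ℤ :=
  FreeGroup.lift (psiGen ℓ v)

/-- The retraction onto the subgroup generated by the first two generators. -/
def rho (ℓ : ℕ) (x₁ x₂ : FreeGroup (Fin (ℓ + 2))) :
    FreeGroup (Fin (ℓ + 2)) →* FreeGroup (Fin (ℓ + 2)) :=
  FreeGroup.lift (fun j => if (j : ℕ) = 0 then x₁ else if (j : ℕ) = 1 then x₂ else 1)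

section Test
variable (ℓ v : ℕ) (hℓ : 1 ≤ ℓ) (hv : 2 ≤ v)
    (x₁ x₂ : FreeGroup (Fin (ℓ + 2)))
    (hx₁ : x₁ = FreeGroup.of ⟨0, Nat.succ_pos (ℓ + 1)⟩)
    (hx₂ : x₂ = FreeGroup.of ⟨1, Nat.succ_lt_succ (Nat.succ_pos ℓ)⟩)

example : psi ℓ v x₁ = SemidirectProduct.inr (Multiplicative.ofAdd (1 : ℤ)) := by
  rw [hx₁]; simp [psi, psiGen]

example : psi ℓ v x₂ =
    SemidirectProduct.inl (Multiplicative.ofAdd (Pi.single (0 : ZMod v) (1 : ZMod 2))) *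
      SemidirectProduct.inr (Multiplicative.ofAdd (1 : ℤ)) := by
  rw [hx₂]; simp [psi, psiGen]

example (j : Fin (ℓ + 2)) (hj : 2 ≤ (j : ℕ)) : psi ℓ v (FreeGroup.of j) = 1 := by
  show FreeGroup.lift (psiGen ℓ v) (FreeGroup.of j) = 1
  rw [FreeGroup.lift_apply_of, psiGen, if_neg (by omega), if_neg (by omega)]

example (z : ℤ) :
    (SemidirectProduct.inr (Multiplicative.ofAdd (1 : ℤ)) :
      (Multiplicative (ZMod v → ZMod 2)) ⋊[phiz v] Multiplicative ℤ) ^ z =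
    SemidirectProduct.inr (Multiplicative.ofAdd z) := by
  rw [← map_zpow, ← ofAdd_zsmul]
  norm_num

end Test

lemma psi_conjGen (ℓ v : ℕ) (x₁ x₂ : FreeGroup (Fin (ℓ + 2)))
    (hx₁ : x₁ = FreeGroup.of ⟨0, Nat.succ_pos (ℓ + 1)⟩)
    (hx₂ : x₂ = FreeGroup.of ⟨1, Nat.succ_lt_succ (Nat.succ_pos ℓ)⟩)
    (i : ℕ) : psi ℓ v (conjGen x₁ x₂ i) =
    SemidirectProduct.inl (Multiplicative.ofAdd (Pi.single ((i : ℕ) : ZMod v) (1 : ZMod 2))) := by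
  have hψ1 : psi ℓ v x₁ = SemidirectProduct.inr (Multiplicative.ofAdd (1 : ℤ)) := by
    rw [hx₁]; simp [psi, psiGen]
  have hψ2 : psi ℓ v x₂ =
      SemidirectProduct.inl (Multiplicative.ofAdd (Pi.single (0 : ZMod v) (1 : ZMod 2))) *
        SemidirectProduct.inr (Multiplicative.ofAdd (1 : ℤ)) := by
    rw [hx₂]; simp [psi, psiGen]
  have hpow : ∀ z : ℤ,
      (SemidirectProduct.inr (Multiplicative.ofAdd (1 : ℤ)) :
        (Multiplicative (ZMod v → ZMod 2)) ⋊[phiz v] Multiplicative ℤ) ^ z =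
      SemidirectProduct.inr (Multiplicative.ofAdd z) := by
    intro z; rw [← map_zpow, ← ofAdd_zsmul]; norm_num
  rw [conjGen, map_mul, map_mul, map_zpow, map_zpow, hψ1, hψ2, hpow, hpow]
  rw [mul_assoc (SemidirectProduct.inr (Multiplicative.ofAdd (i : ℤ))), mul_assoc, ← map_mul]
  have h1 : (Multiplicative.ofAdd (1:ℤ)) * Multiplicative.ofAdd (-((i:ℤ)+1)) =
      (Multiplicative.ofAdd (i:ℤ))⁻¹ := by
    rw [← ofAdd_add, ← ofAdd_neg]; congr 1; ring
  rw [h1, ← mul_assoc, ← SemidirectProduct.inl_aut]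
  congr 1
  apply (Multiplicative.toAdd).injective
  funext x
  show (Pi.single (0 : ZMod v) (1 : ZMod 2) : ZMod v → ZMod 2) (x - ((i:ℤ) : ZMod v)) =
    (Pi.single ((i:ℕ) : ZMod v) (1 : ZMod 2) : ZMod v → ZMod 2) x
  rw [Pi.single_apply, Pi.single_apply]
  congr 1
  simp [sub_eq_zero]

/-- With `H = ⟨x₁ⁱx₂x₁^{-(i+1)} (0 ≤ i ≤ v-2), x₃, …, x_{ℓ+2}⟩` and `K = ⟨x₁, x₂⟩`
in the free group on `x₁, …, x_{ℓ+2}`, we have `r̄(H ∩ K) = v - 2` and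
`r̄(H ∨ K) = ℓ + 1`. -/
theorem rbar_inf_and_sup (ℓ v : ℕ) (hℓ : 1 ≤ ℓ) (hv : 2 ≤ v)
    (x₁ x₂ : FreeGroup (Fin (ℓ + 2)))
    (hx₁ : x₁ = FreeGroup.of ⟨0, by omega⟩)
    (hx₂ : x₂ = FreeGroup.of ⟨1, by omega⟩)
    (H K : Subgroup (FreeGroup (Fin (ℓ + 2))))
    (hH : H = Subgroup.closure
      ({g | ∃ i : ℕ, i ≤ v - 2 ∧ g = x₁ ^ (i : ℤ) * x₂ * x₁ ^ (-((i : ℤ) + 1))} ∪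
       {g | ∃ j : Fin (ℓ + 2), 2 ≤ (j : ℕ) ∧ g = FreeGroup.of j}))
    (hK : K = Subgroup.closure {x₁, x₂}) :
    rbar ↥(H ⊓ K) = v - 2 ∧ rbar ↥(H ⊔ K) = ℓ + 1 := by
  classical
  haveI : NeZero v := ⟨by omega⟩
  -- the join is everything
  have hsup : H ⊔ K = ⊤ := by
    rw [eq_top_iff, ← FreeGroup.closure_range_of (Fin (ℓ + 2))]
    refine (Subgroup.closure_le _).2 ?_
    rintro y ⟨j, rfl⟩
    by_cases hj : (j : ℕ) ≤ 1
    · have hcase : FreeGroup.of j = x₁ ∨ FreeGroup.of j = x₂ := by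
        have : (j : ℕ) = 0 ∨ (j : ℕ) = 1 := by omega
        rcases this with h0 | h1
        · left; rw [hx₁]; congr 1; exact Fin.ext h0
        · right; rw [hx₂]; congr 1; exact Fin.ext h1
      have hx₁K : x₁ ∈ K := by rw [hK]; exact Subgroup.subset_closure (by simp)
      have hx₂K : x₂ ∈ K := by rw [hK]; exact Subgroup.subset_closure (by simp)
      rcases hcase with h | h <;> rw [h] <;>
        exact SetLike.mem_coe.2 (Subgroup.mem_sup_right (by assumption))
    · refine SetLike.mem_coe.2 (Subgroup.mem_sup_left ?_)
      rw [hH]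
      exact Subgroup.subset_closure (Or.inr ⟨j, by omega, rfl⟩)
  have hgrank_sup : grank ↥(H ⊔ K) = ℓ + 2 := by
    rw [hsup, grank_congr Subgroup.topEquiv]
    refine grank_eq_of (Finset.univ.image FreeGroup.of) ?_ ?_ ?_
    · rw [Finset.card_image_of_injective _ FreeGroup.of_injective, Finset.card_univ,
        Fintype.card_fin]
    · rw [Finset.coe_image, Finset.coe_univ, Set.image_univ, FreeGroup.closure_range_of]
    · intro T hT
      have hli : LinearIndependent (ZMod 2) (fun j : Fin (ℓ + 2) => Pi.single j (1 : ZMod 2)) := by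
        have := (Pi.basisFun (ZMod 2) (Fin (ℓ + 2))).linearIndependent
        have heq : ⇑(Pi.basisFun (ZMod 2) (Fin (ℓ + 2))) =
            fun j : Fin (ℓ + 2) => Pi.single j (1 : ZMod 2) := by
          funext j; simp
        rwa [heq] at this
      exact card_ge_of_linearIndependent
        (FreeGroup.lift (fun j : Fin (ℓ + 2) => Multiplicative.ofAdd (Pi.single j (1 : ZMod 2))))
        hli (fun i => ⟨FreeGroup.of i, by rw [FreeGroup.lift_apply_of]⟩) T hT
  -- the intersection
  set N : Subgroup (FreeGroup (Fin (ℓ + 2))) :=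
    Subgroup.closure {y | ∃ i : ℕ, i ≤ v - 2 ∧ y = conjGen x₁ x₂ i} with hNdef
  have hx₁K : x₁ ∈ K := by rw [hK]; exact Subgroup.subset_closure (by simp)
  have hx₂K : x₂ ∈ K := by rw [hK]; exact Subgroup.subset_closure (by simp)
  have hgK : ∀ i : ℕ, conjGen x₁ x₂ i ∈ K := fun i =>
    mul_mem (mul_mem (zpow_mem hx₁K _) hx₂K) (zpow_mem hx₁K _)
  have hgH : ∀ i : ℕ, i ≤ v - 2 → conjGen x₁ x₂ i ∈ H := by
    intro i hi
    rw [hH]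
    exact Subgroup.subset_closure (Or.inl ⟨i, hi, rfl⟩)
  have hρ1 : rho ℓ x₁ x₂ x₁ = x₁ := by
    conv_lhs => rw [hx₁]
    simp [rho]
    rw [hx₁]
    exact congrArg FreeGroup.of (Fin.ext (by simp))
  have hρ2 : rho ℓ x₁ x₂ x₂ = x₂ := by
    conv_lhs => rw [hx₂]
    simp [rho]
    rw [hx₂]
    exact congrArg FreeGroup.of (Fin.ext (by simp))
  have hρof : ∀ j : Fin (ℓ + 2), 2 ≤ (j : ℕ) → rho ℓ x₁ x₂ (FreeGroup.of j) = 1 := by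
    intro j hj
    show FreeGroup.lift _ (FreeGroup.of j) = 1
    rw [FreeGroup.lift_apply_of, if_neg (by omega), if_neg (by omega)]
  have hρg : ∀ i : ℕ, rho ℓ x₁ x₂ (conjGen x₁ x₂ i) = conjGen x₁ x₂ i := by
    intro i
    simp only [conjGen, map_mul, map_zpow, hρ1, hρ2]
  have hfix : ∀ w ∈ K, rho ℓ x₁ x₂ w = w := by
    intro w hw
    rw [hK] at hw
    induction hw using Subgroup.closure_induction with
    | mem y hy =>
        rcases hy with h | h
        · rw [h]; exact hρ1
        · rw [Set.mem_singleton_iff.1 h]; exact hρ2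
    | one => exact map_one _
    | mul a b _ _ ha hb => rw [map_mul, ha, hb]
    | inv a _ ha => rw [map_inv, ha]
  have hmapN : ∀ w ∈ H, rho ℓ x₁ x₂ w ∈ N := by
    intro w hw
    rw [hH] at hw
    induction hw using Subgroup.closure_induction with
    | mem y hy =>
        rcases hy with ⟨i, hi, rfl⟩ | ⟨j, hj, rfl⟩
        · rw [show x₁ ^ (i : ℤ) * x₂ * x₁ ^ (-((i : ℤ) + 1)) = conjGen x₁ x₂ i from rfl, hρg]
          exact Subgroup.subset_closure ⟨i, hi, rfl⟩
        · rw [hρof j hj]; exact one_mem N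
    | one => rw [map_one]; exact one_mem N
    | mul a b _ _ ha hb => rw [map_mul]; exact mul_mem ha hb
    | inv a _ ha => rw [map_inv]; exact inv_mem ha
  have hinf : H ⊓ K = N := by
    refine le_antisymm ?_ (le_inf ?_ ?_)
    · intro w hw
      have h1 := hmapN w hw.1
      rwa [hfix w hw.2] at h1
    · refine (Subgroup.closure_le _).2 ?_
      rintro y ⟨i, hi, rfl⟩
      exact hgH i hi
    · refine (Subgroup.closure_le _).2 ?_
      rintro y ⟨i, hi, rfl⟩
      exact hgK i
  -- injectivity of the conjugated generators
  have hginj : ∀ i j : ℕ, i < v - 1 → j < v - 1 → conjGen x₁ x₂ i = conjGen x₁ x₂ j → i = j := by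
    intro i j hi hj h
    have h1 := congrArg (psi ℓ v) h
    rw [psi_conjGen ℓ v x₁ x₂ hx₁ hx₂ i, psi_conjGen ℓ v x₁ x₂ hx₁ hx₂ j] at h1
    have h2 := Multiplicative.ofAdd.injective (SemidirectProduct.inl_injective h1)
    have h3 := congrFun h2 ((i : ℕ) : ZMod v)
    rw [Pi.single_eq_same, Pi.single_apply] at h3
    have h4 : ((i : ℕ) : ZMod v) = ((j : ℕ) : ZMod v) := by
      by_contra hne
      rw [if_neg hne] at h3
      exact one_ne_zero h3
    have h5 := congrArg ZMod.val h4
    rwa [ZMod.val_cast_of_lt (by omega), ZMod.val_cast_of_lt (by omega)] at h5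
  have hmemN : ∀ i : ℕ, i < v - 1 → conjGen x₁ x₂ i ∈ N := by
    intro i hi
    exact Subgroup.subset_closure ⟨i, by omega, rfl⟩
  have hgrank_inf : grank ↥(H ⊓ K) = v - 1 := by
    rw [hinf]
    refine grank_eq_of ((Finset.range (v - 1)).attach.image
      (fun i => (⟨conjGen x₁ x₂ i.1, hmemN i.1 (Finset.mem_range.1 i.2)⟩ : ↥N))) ?_ ?_ ?_
    · rw [Finset.card_image_of_injective, Finset.card_attach, Finset.card_range]
      intro a b hab
      have hval : conjGen x₁ x₂ a.1 = conjGen x₁ x₂ b.1 := congrArg Subtype.val hab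
      exact Subtype.ext (hginj a.1 b.1 (Finset.mem_range.1 a.2) (Finset.mem_range.1 b.2) hval)
    · apply closure_subtype_top
      have himg : ((↑) '' ((((Finset.range (v - 1)).attach.image
          (fun i => (⟨conjGen x₁ x₂ i.1, hmemN i.1 (Finset.mem_range.1 i.2)⟩ : ↥N))) :
            Finset ↥N) : Set ↥N) : Set (FreeGroup (Fin (ℓ + 2)))) =
          {y | ∃ i : ℕ, i ≤ v - 2 ∧ y = conjGen x₁ x₂ i} := by
        ext y
        constructor
        · rintro ⟨z, hz, rfl⟩
          rw [Finset.mem_coe, Finset.mem_image] at hz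
          obtain ⟨i, _, rfl⟩ := hz
          exact ⟨i.1, by have := Finset.mem_range.1 i.2; omega, rfl⟩
        · rintro ⟨i, hi, rfl⟩
          refine ⟨⟨conjGen x₁ x₂ i, hmemN i (by omega)⟩, ?_, rfl⟩
          rw [Finset.mem_coe, Finset.mem_image]
          exact ⟨⟨i, Finset.mem_range.2 (by omega)⟩, Finset.mem_attach _ _, rfl⟩
      rw [himg, ← hNdef]
    · intro T hT
      -- the homomorphism into the vector-space part
      have hrangeAll : ∀ y ∈ N, psi ℓ v y ∈
          (SemidirectProduct.inl :
            Multiplicative (ZMod v → ZMod 2) →* _ ⋊[phiz v] Multiplicative ℤ).range := by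
        intro y hy
        induction hy using Subgroup.closure_induction with
        | mem z hz =>
            obtain ⟨i, _, rfl⟩ := hz
            exact ⟨_, (psi_conjGen ℓ v x₁ x₂ hx₁ hx₂ i).symm⟩
        | one => rw [map_one]; exact one_mem _
        | mul a b _ _ ha hb => rw [map_mul]; exact mul_mem ha hb
        | inv a _ ha => rw [map_inv]; exact inv_mem ha
      set e := MonoidHom.ofInjective (SemidirectProduct.inl_injective
        (φ := phiz v)) with hedef
      set f : ↥N →* Multiplicative (ZMod v → ZMod 2) :=
        e.symm.toMonoidHom.comp (((psi ℓ v).comp N.subtype).codRestrict _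
          (fun x => hrangeAll x.1 x.2)) with hfdef
      have hfval : ∀ (i : ℕ) (hi : i < v - 1),
          f ⟨conjGen x₁ x₂ i, hmemN i hi⟩ =
            Multiplicative.ofAdd (Pi.single ((i : ℕ) : ZMod v) (1 : ZMod 2)) := by
        intro i hi
        rw [hfdef]
        simp only [MonoidHom.coe_comp, MulEquiv.coe_toMonoidHom, Function.comp_apply]
        rw [MulEquiv.symm_apply_eq]
        refine Subtype.ext ?_
        show psi ℓ v (conjGen x₁ x₂ i) = SemidirectProduct.inl
          (Multiplicative.ofAdd (Pi.single ((i : ℕ) : ZMod v) (1 : ZMod 2)))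
        exact psi_conjGen ℓ v x₁ x₂ hx₁ hx₂ i
      have binj : Function.Injective (fun i : Fin (v - 1) => (((i : ℕ) : ℕ) : ZMod v)) := by
        intro a b hab
        have h5 := congrArg ZMod.val hab
        rw [ZMod.val_cast_of_lt (by omega), ZMod.val_cast_of_lt (by omega)] at h5
        exact Fin.ext h5
      have hli : LinearIndependent (ZMod 2)
          (fun i : Fin (v - 1) =>
            (Pi.single (((i : ℕ) : ZMod v)) (1 : ZMod 2) : ZMod v → ZMod 2)) := by
        have h0 := ((Pi.basisFun (ZMod 2) (ZMod v)).linearIndependent).comp _ binj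
        have heq : (⇑(Pi.basisFun (ZMod 2) (ZMod v)) ∘
            (fun i : Fin (v - 1) => (((i : ℕ) : ℕ) : ZMod v))) =
            fun i : Fin (v - 1) => (Pi.single (((i : ℕ) : ZMod v)) (1 : ZMod 2) : ZMod v → ZMod 2) := by
          funext i; simp
        rwa [heq] at h0
      refine card_ge_of_linearIndependent f hli ?_ T hT
      intro i
      exact ⟨⟨conjGen x₁ x₂ i.1, hmemN i.1 i.2⟩, hfval i.1 i.2⟩
  constructor
  · rw [rbar, hgrank_inf]; omega
  · rw [rbar, hgrank_sup]
    omega
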